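/- In the IOTA DAG model, fix a constant b > 10·h_M − 6·h_1 + 3·M·ε_max + 2 and a constant κ_A > 1 + max{2·h_M, 3·h_M·(h_M + ε_min)/(h_M − 1)}, and assume h_M > 1. For any i and any event D_{i−1} ∈ Σ_{i−1} with D_{i−1} ⊆ {L(t_i) ≤ b} and P(D_{i−1}) > 0, the conditional probability P(A_i | D_{i−1}) is strictly positive, where A_i is the Step-A event. -/

import Mathlib

/- ## Deterministic core of the IOTA DAG model.

Time is discrete, `t_n = n`.  A realization of the model is described by four
sequences `θ e x y : ℕ → ℕ`: vertex `n ≥ 1` arrives at time `n`, has POW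
duration `θ n`, observation delay `e n`, and parents `x n`, `y n`
(selected among the tips of the graph at time `n - e n`, truncated subtraction
encoding the convention `G(t) = G(t₀)` for `t < 0`).  The vertex `n` and the
directed edges `(n, x n)`, `(n, y n)` are added to the DAG at time `n + θ n`,
i.e. they are present in `G(m)` exactly when `n + θ n < m`. -/

namespace IotaDAG

/-- `V θ n`: set of vertices of the DAG at time `n` (completed POW). -/
def V (θ : ℕ → ℕ) (n : ℕ) : Set ℕ := {0} ∪ {k | 1 ≤ k ∧ k + θ k < n}

/-- `E θ x y n`: set of (solid) directed edges of the DAG at time `n`. -/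
def E (θ x y : ℕ → ℕ) (n : ℕ) : Set (ℕ × ℕ) :=
  {p | ∃ k, 1 ≤ k ∧ k + θ k < n ∧ (p = (k, x k) ∨ p = (k, y k))}

/-- `V' θ n`: set of arrived vertices whose POW is unfinished at time `n`. -/
def V' (θ : ℕ → ℕ) (n : ℕ) : Set ℕ := {k | 1 ≤ k ∧ k < n ∧ n ≤ k + θ k}

/-- Tips at time `n`: vertices of in-degree 0. -/
def tips (θ x y : ℕ → ℕ) (n : ℕ) : Set ℕ :=
  {v | v ∈ V θ n ∧ ∀ i, (i, v) ∉ E θ x y n}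

/-- Pending tips at time `n`: tips already selected as a parent by some arrived
vertex whose POW is unfinished. -/
def pend (θ x y : ℕ → ℕ) (n : ℕ) : Set ℕ :=
  {v | v ∈ tips θ x y n ∧ ∃ j ∈ V' θ n, x j = v ∨ y j = v}

/-- Free tips at time `n`: tips that are not pending. -/
def free (θ x y : ℕ → ℕ) (n : ℕ) : Set ℕ := tips θ x y n \ pend θ x y n

/-- `L(t_n)`: number of tips. -/
noncomputable def L (θ x y : ℕ → ℕ) (n : ℕ) : ℕ := (tips θ x y n).ncard

/-- `W(t_n)`: number of pending tips. -/
noncomputable def W (θ x y : ℕ → ℕ) (n : ℕ) : ℕ := (pend θ x y n).ncard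

/-- `F(t_n)`: number of free tips. -/
noncomputable def F (θ x y : ℕ → ℕ) (n : ℕ) : ℕ := (free θ x y n).ncard

/-- Validity of a realization: every arriving vertex selects both of its parents
among the tips of the graph observed with its delay. -/
def Valid (θ e x y : ℕ → ℕ) : Prop :=
  ∀ n, 1 ≤ n → x n ∈ tips θ x y (n - e n) ∧ y n ∈ tips θ x y (n - e n)

/-- Directed edge relation of the limiting graph `⋃ₜ G(t)`. -/
def edgeRel (x y : ℕ → ℕ) (a b : ℕ) : Prop := 1 ≤ a ∧ (x a = b ∨ y a = b)

/-- `Reach x y w u`: `u` is reachable from `w`, i.e. there is a directed path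
from `w` to `u` in the limiting graph `⋃ₜ G(t)`. -/
def Reach (x y : ℕ → ℕ) (w u : ℕ) : Prop := Relation.ReflTransGen (edgeRel x y) w u

end IotaDAG
namespace IotaDAG

/- ## The bottleneck construction (Steps A, B, C). -/

/-- Step-A (tidying) event for a realization: every vertex `j` arriving at a time in
`[i, i + κA)` has delay `εmin`, POW duration `hM`, selects a single parent
(`x j = y j`) which lies outside the current free tips whenever possible. -/
def StepA (θ e x y : ℕ → ℕ) (hM εmin κA i : ℕ) : Prop :=
  ∀ j, 1 ≤ j → i ≤ j → j < i + κA →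
    e j = εmin ∧ θ j = hM ∧ x j = y j ∧
    (¬ tips θ x y (j - εmin) ⊆ free θ x y j →
        x j ∈ tips θ x y (j - εmin) \ free θ x y j) ∧
    (tips θ x y (j - εmin) ⊆ free θ x y j → x j ∈ tips θ x y (j - εmin))

/-- `FB`: the set consisting of the `2 (hM + εmin)` smallest elements of the set of
free tips at time `i + κA`. -/
def FB (θ x y : ℕ → ℕ) (hM εmin κA i : ℕ) : Set ℕ :=
  {v | v ∈ free θ x y (i + κA) ∧
        (free θ x y (i + κA) ∩ Set.Iic v).ncard ≤ 2 * (hM + εmin)}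

/-- Step-B (preparation) event: every vertex `j` arriving at a time in
`[i + κA, i + κB)` has POW duration `hM`, delay `εmin`, and selects a single parent
among the tips it observes, avoiding the reserved set `FB`. -/
def StepB (θ e x y : ℕ → ℕ) (hM εmin κA κB i : ℕ) : Prop :=
  ∀ j, 1 ≤ j → i + κA ≤ j → j < i + κB →
    θ j = hM ∧ e j = εmin ∧ x j = y j ∧
    x j ∈ tips θ x y (j - εmin) \ FB θ x y hM εmin κA i

/-- `c_i := F(t_i + κB) + |V'(t_i + κB)|`. -/
noncomputable def ci (θ x y : ℕ → ℕ) (κB i : ℕ) : ℕ :=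
  F θ x y (i + κB) + (V' θ (i + κB)).ncard

/-- The labelling `ξ (i, j, k)` of the interchange structure: for `j = 1` it is the
`k`-th smallest element of `F(t_i + κB) ∪ V'(t_i + κB)` (1-indexed), and for `j ≥ 2`
it is the vertex arriving at time `i + κB - 1 + (j - 2) * c_i + k`. -/
noncomputable def ξ (θ x y : ℕ → ℕ) (κB i j k : ℕ) : ℕ :=
  if j ≤ 1 then Nat.nth (fun v => v ∈ free θ x y (i + κB) ∪ V' θ (i + κB)) (k - 1)
  else i + κB - 1 + (j - 2) * ci θ x y κB i + k

/-- Step-C (interchange) event: every vertex `v` arriving at a time in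
`[i + κB, i + κC]`, with additional label `(i, j, k)` where
`j = 2 + (v - (i + κB)) / c_i` and `k = (v - (i + κB)) % c_i + 1`, has POW duration
`hM`, delay `εmin`, and parents `x v = ξ (i, j-1, max 1 (k-1))`,
`y v = ξ (i, j-1, min (k+1) c_i)`. -/
noncomputable def StepC (θ e x y : ℕ → ℕ) (hM εmin κB κC i : ℕ) : Prop :=
  ∀ v, 1 ≤ v → i + κB ≤ v → v ≤ i + κC →
    θ v = hM ∧ e v = εmin ∧
    x v = ξ θ x y κB i (1 + (v - (i + κB)) / ci θ x y κB i)
            (max 1 ((v - (i + κB)) % ci θ x y κB i)) ∧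
    y v = ξ θ x y κB i (1 + (v - (i + κB)) / ci θ x y κB i)
            (min ((v - (i + κB)) % ci θ x y κB i + 2) (ci θ x y κB i))

end IotaDAG
namespace IotaDAG

/-- `Σ_i`: the σ-algebra generated by the random variables
`Θ_k, ε_k, X_k, Y_k` for `k = 1, …, i`. -/
def sigAlg {Ω : Type*} (Θ ε X Y : ℕ → Ω → ℕ) (i : ℕ) : MeasurableSpace Ω :=
  ⨆ k ∈ Finset.Icc 1 i,
    (MeasurableSpace.comap (Θ k) ⊤ ⊔ MeasurableSpace.comap (ε k) ⊤ ⊔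
      MeasurableSpace.comap (X k) ⊤ ⊔ MeasurableSpace.comap (Y k) ⊤)

end IotaDAG

open MeasureTheory ProbabilityTheory IotaDAG
open scoped Classical

namespace IotaDAG
open MeasureTheory
variable {Ω : Type*} (Θ ε X Y : ℕ → Ω → ℕ)

-- ### auxiliary deterministic lemmas

lemma mem_tips_iff (θ x y : ℕ → ℕ) (t v : ℕ) :
    v ∈ tips θ x y t ↔ (v = 0 ∨ (1 ≤ v ∧ v + θ v < t)) ∧
      ∀ k, 1 ≤ k → k + θ k < t → x k ≠ v ∧ y k ≠ v := by
  simp only [tips, V, E, Set.mem_setOf_eq, Set.mem_union, Set.mem_singleton_iff,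
    Prod.mk.injEq, not_exists]
  constructor
  · rintro ⟨h1, h2⟩
    refine ⟨h1, fun k hk1 hk2 => ⟨fun hx => h2 k k ⟨hk1, hk2, Or.inl ⟨rfl, hx.symm⟩⟩,
      fun hy => h2 k k ⟨hk1, hk2, Or.inr ⟨rfl, hy.symm⟩⟩⟩⟩
  · rintro ⟨h1, h2⟩
    refine ⟨h1, fun i k ⟨hk1, hk2, hc⟩ => ?_⟩
    rcases hc with ⟨hik, hv⟩ | ⟨hik, hv⟩
    · exact (h2 k hk1 hk2).1 hv.symm
    · exact (h2 k hk1 hk2).2 hv.symm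

lemma mem_free_iff (θ x y : ℕ → ℕ) (t v : ℕ) :
    v ∈ free θ x y t ↔ v ∈ tips θ x y t ∧
      ∀ j, 1 ≤ j → j < t → t ≤ j + θ j → x j ≠ v ∧ y j ≠ v := by
  simp only [free, pend, V', Set.mem_diff, Set.mem_setOf_eq]
  constructor
  · rintro ⟨ht, hp⟩
    refine ⟨ht, fun j h1 h2 h3 => ⟨fun hx => hp ⟨ht, j, ⟨h1, h2, h3⟩, Or.inl hx⟩,
      fun hy => hp ⟨ht, j, ⟨h1, h2, h3⟩, Or.inr hy⟩⟩⟩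
  · rintro ⟨ht, h⟩
    refine ⟨ht, ?_⟩
    rintro ⟨-, j, ⟨h1, h2, h3⟩, hxy⟩
    rcases hxy with hx | hy
    · exact (h j h1 h2 h3).1 hx
    · exact (h j h1 h2 h3).2 hy

lemma mem_tips_lt {θ x y : ℕ → ℕ} {t n v : ℕ} (ht : t ≤ n) (hn : 1 ≤ n)
    (h : v ∈ tips θ x y t) : v < n := by
  rcases ((mem_tips_iff θ x y t v).1 h).1 with h0 | ⟨-, h1⟩ <;> omega

lemma tips_finite (θ x y : ℕ → ℕ) (t : ℕ) : (tips θ x y t).Finite := by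
  apply (Set.finite_Iio (t+1)).subset
  intro v hv
  exact mem_tips_lt (by omega) (by omega) hv

lemma free_subset_tips (θ x y : ℕ → ℕ) (t : ℕ) : free θ x y t ⊆ tips θ x y t :=
  Set.diff_subset

lemma tips_nonempty {θ e x y : ℕ → ℕ} (hV : Valid θ e x y) (t : ℕ) :
    (tips θ x y t).Nonempty := by
  classical
  set Ft : Finset ℕ := (Finset.range (t+1)).filter (fun k => k ∈ V θ t) with hFt
  have h0 : (0 : ℕ) ∈ Ft := by
    simp [hFt, V, Finset.mem_filter]
  have hne : Ft.Nonempty := ⟨0, h0⟩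
  set v := Ft.max' hne with hv
  have hvV : v ∈ V θ t := (Finset.mem_filter.1 (Ft.max'_mem hne)).2
  refine ⟨v, hvV, ?_⟩
  rintro i ⟨k, hk1, hk2, hc⟩
  have hkF : k ∈ Ft := by
    simp only [hFt, Finset.mem_filter, Finset.mem_range]
    exact ⟨by omega, Or.inr ⟨hk1, hk2⟩⟩
  have hkv : k ≤ v := Ft.le_max' k hkF
  have hxk : x k ∈ tips θ x y (k - e k) := (hV k hk1).1
  have hyk : y k ∈ tips θ x y (k - e k) := (hV k hk1).2
  have hvk : 1 ≤ v := by
    rcases hvV with h0 | ⟨h1, -⟩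
    · simp only [Set.mem_singleton_iff] at h0; omega
    · exact h1
  rcases hc with hxeq | hyeq
  · have hvx : v = x k := by simpa using (congrArg Prod.snd hxeq)
    rcases ((mem_tips_iff _ _ _ _ _).1 hxk).1 with h0 | ⟨-, h1⟩ <;> omega
  · have hvy : v = y k := by simpa using (congrArg Prod.snd hyeq)
    rcases ((mem_tips_iff _ _ _ _ _).1 hyk).1 with h0 | ⟨-, h1⟩ <;> omega


open MeasureTheory

variable {Ω : Type*} (Θ ε X Y : ℕ → Ω → ℕ)

lemma comap_le_sigAlg {m k : ℕ} (h1 : 1 ≤ k) (h2 : k ≤ m) :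
    MeasurableSpace.comap (Θ k) ⊤ ≤ sigAlg Θ ε X Y m ∧
    MeasurableSpace.comap (ε k) ⊤ ≤ sigAlg Θ ε X Y m ∧
    MeasurableSpace.comap (X k) ⊤ ≤ sigAlg Θ ε X Y m ∧
    MeasurableSpace.comap (Y k) ⊤ ≤ sigAlg Θ ε X Y m := by
  have hle : (MeasurableSpace.comap (Θ k) ⊤ ⊔ MeasurableSpace.comap (ε k) ⊤ ⊔
      MeasurableSpace.comap (X k) ⊤ ⊔ MeasurableSpace.comap (Y k) ⊤) ≤ sigAlg Θ ε X Y m := by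
    apply le_iSup₂ (f := fun (j : ℕ) (_ : j ∈ Finset.Icc 1 m) =>
      (MeasurableSpace.comap (Θ j) ⊤ ⊔ MeasurableSpace.comap (ε j) ⊤ ⊔
        MeasurableSpace.comap (X j) ⊤ ⊔ MeasurableSpace.comap (Y j) ⊤)) k
      (Finset.mem_Icc.2 ⟨h1, h2⟩)
  exact ⟨le_trans (le_sup_of_le_left (le_sup_of_le_left le_sup_left)) hle,
    le_trans (le_sup_of_le_left (le_sup_of_le_left le_sup_right)) hle,
    le_trans (le_sup_of_le_left le_sup_right) hle,
    le_trans le_sup_right hle⟩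

lemma measSet_Θ {m k : ℕ} (h1 : 1 ≤ k) (h2 : k ≤ m) (s : Set ℕ) :
    MeasurableSet[sigAlg Θ ε X Y m] (Θ k ⁻¹' s) :=
  (comap_le_sigAlg Θ ε X Y h1 h2).1 _ ⟨s, trivial, rfl⟩

lemma measSet_ε {m k : ℕ} (h1 : 1 ≤ k) (h2 : k ≤ m) (s : Set ℕ) :
    MeasurableSet[sigAlg Θ ε X Y m] (ε k ⁻¹' s) :=
  (comap_le_sigAlg Θ ε X Y h1 h2).2.1 _ ⟨s, trivial, rfl⟩

lemma measSet_X {m k : ℕ} (h1 : 1 ≤ k) (h2 : k ≤ m) (s : Set ℕ) :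
    MeasurableSet[sigAlg Θ ε X Y m] (X k ⁻¹' s) :=
  (comap_le_sigAlg Θ ε X Y h1 h2).2.2.1 _ ⟨s, trivial, rfl⟩

lemma measSet_Y {m k : ℕ} (h1 : 1 ≤ k) (h2 : k ≤ m) (s : Set ℕ) :
    MeasurableSet[sigAlg Θ ε X Y m] (Y k ⁻¹' s) :=
  (comap_le_sigAlg Θ ε X Y h1 h2).2.2.2 _ ⟨s, trivial, rfl⟩

lemma sigAlg_mono {m m' : ℕ} (h : m ≤ m') : sigAlg Θ ε X Y m ≤ sigAlg Θ ε X Y m' := by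
  apply biSup_mono
  intro k hk
  rw [Finset.mem_Icc] at *
  omega

lemma measSet_mem_tips {m t : ℕ} (ht : t ≤ m + 1) (v : ℕ) :
    MeasurableSet[sigAlg Θ ε X Y m]
      {ω | v ∈ tips (fun j => Θ j ω) (fun j => X j ω) (fun j => Y j ω) t} := by
  have heq : {ω | v ∈ tips (fun j => Θ j ω) (fun j => X j ω) (fun j => Y j ω) t} =
      {ω | v = 0 ∨ (1 ≤ v ∧ v + Θ v ω < t)} ∩
        ⋂ k, {ω | ¬(1 ≤ k ∧ k + Θ k ω < t ∧ (X k ω = v ∨ Y k ω = v))} := by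
    ext ω
    simp only [Set.mem_setOf_eq, mem_tips_iff, Set.mem_inter_iff, Set.mem_iInter]
    constructor
    · rintro ⟨hv, h⟩
      refine ⟨hv, fun k hk => ?_⟩
      obtain ⟨hk1, hk2, hk3⟩ := hk
      rcases hk3 with hx | hy
      · exact (h k hk1 hk2).1 hx
      · exact (h k hk1 hk2).2 hy
    · rintro ⟨hv, h⟩
      exact ⟨hv, fun k hk1 hk2 => ⟨fun hx => h k ⟨hk1, hk2, Or.inl hx⟩,
        fun hy => h k ⟨hk1, hk2, Or.inr hy⟩⟩⟩
  rw [heq]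
  refine MeasurableSet.inter ?_ (MeasurableSet.iInter fun k => ?_)
  · by_cases hv0 : v = 0
    · have h : {ω : Ω | v = 0 ∨ (1 ≤ v ∧ v + Θ v ω < t)} = Set.univ := by
        ext ω; simp [hv0]
      rw [h]; exact @MeasurableSet.univ _ (sigAlg Θ ε X Y m)
    · by_cases hvt : v < t
      · have h1 : 1 ≤ v := by omega
        have h : {ω : Ω | v = 0 ∨ (1 ≤ v ∧ v + Θ v ω < t)} = Θ v ⁻¹' {a | v + a < t} := by
          ext ω
          simp only [Set.mem_setOf_eq, Set.mem_preimage, hv0, h1, false_or, true_and]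
        rw [h]
        exact measSet_Θ Θ ε X Y h1 (by omega) _
      · have h : {ω : Ω | v = 0 ∨ (1 ≤ v ∧ v + Θ v ω < t)} = (∅ : Set Ω) := by
          ext ω
          simp only [Set.mem_setOf_eq, Set.mem_empty_iff_false, iff_false]
          rintro (h0 | ⟨ha, hb⟩) <;> omega
        rw [h]; exact @MeasurableSet.empty _ (sigAlg Θ ε X Y m)
  · by_cases hk : 1 ≤ k ∧ k < t
    · have h : {ω : Ω | ¬(1 ≤ k ∧ k + Θ k ω < t ∧ (X k ω = v ∨ Y k ω = v))} =
          (Θ k ⁻¹' {a | k + a < t} ∩ (X k ⁻¹' {v} ∪ Y k ⁻¹' {v}))ᶜ := by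
        ext ω
        simp only [Set.mem_setOf_eq, Set.mem_compl_iff, Set.mem_inter_iff, Set.mem_preimage,
          Set.mem_union, Set.mem_singleton_iff, hk.1, true_and]
      rw [h]
      exact (((measSet_Θ Θ ε X Y hk.1 (by omega) _).inter
        ((measSet_X Θ ε X Y hk.1 (by omega) {v}).union
          (measSet_Y Θ ε X Y hk.1 (by omega) {v})))).compl
    · have h : {ω : Ω | ¬(1 ≤ k ∧ k + Θ k ω < t ∧ (X k ω = v ∨ Y k ω = v))} = Set.univ := by
        ext ω
        simp only [Set.mem_setOf_eq, Set.mem_univ, iff_true]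
        rintro ⟨hk1, hk2, -⟩
        omega
      rw [h]; exact @MeasurableSet.univ _ (sigAlg Θ ε X Y m)

lemma measSet_mem_free {m t : ℕ} (ht : t ≤ m + 1) (v : ℕ) :
    MeasurableSet[sigAlg Θ ε X Y m]
      {ω | v ∈ free (fun j => Θ j ω) (fun j => X j ω) (fun j => Y j ω) t} := by
  have heq : {ω | v ∈ free (fun j => Θ j ω) (fun j => X j ω) (fun j => Y j ω) t} =
      {ω | v ∈ tips (fun j => Θ j ω) (fun j => X j ω) (fun j => Y j ω) t} ∩
        ⋂ k, {ω | ¬(1 ≤ k ∧ k < t ∧ t ≤ k + Θ k ω ∧ (X k ω = v ∨ Y k ω = v))} := by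
    ext ω
    simp only [Set.mem_setOf_eq, mem_free_iff, Set.mem_inter_iff, Set.mem_iInter]
    constructor
    · rintro ⟨hv, h⟩
      refine ⟨hv, fun k hk => ?_⟩
      obtain ⟨hk1, hk2, hk3, hk4⟩ := hk
      rcases hk4 with hx | hy
      · exact (h k hk1 hk2 hk3).1 hx
      · exact (h k hk1 hk2 hk3).2 hy
    · rintro ⟨hv, h⟩
      exact ⟨hv, fun k hk1 hk2 hk3 => ⟨fun hx => h k ⟨hk1, hk2, hk3, Or.inl hx⟩,
        fun hy => h k ⟨hk1, hk2, hk3, Or.inr hy⟩⟩⟩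
  rw [heq]
  refine MeasurableSet.inter (measSet_mem_tips Θ ε X Y ht v)
    (MeasurableSet.iInter fun k => ?_)
  by_cases hk : 1 ≤ k ∧ k < t
  · have h : {ω : Ω | ¬(1 ≤ k ∧ k < t ∧ t ≤ k + Θ k ω ∧ (X k ω = v ∨ Y k ω = v))} =
        (Θ k ⁻¹' {a | t ≤ k + a} ∩ (X k ⁻¹' {v} ∪ Y k ⁻¹' {v}))ᶜ := by
      ext ω
      simp only [Set.mem_setOf_eq, Set.mem_compl_iff, Set.mem_inter_iff, Set.mem_preimage,
        Set.mem_union, Set.mem_singleton_iff, hk.1, hk.2, true_and]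
    rw [h]
    exact (((measSet_Θ Θ ε X Y hk.1 (by omega) _).inter
      ((measSet_X Θ ε X Y hk.1 (by omega) {v}).union
        (measSet_Y Θ ε X Y hk.1 (by omega) {v})))).compl
  · have h : {ω : Ω | ¬(1 ≤ k ∧ k < t ∧ t ≤ k + Θ k ω ∧ (X k ω = v ∨ Y k ω = v))} =
        Set.univ := by
      ext ω
      simp only [Set.mem_setOf_eq, Set.mem_univ, iff_true]
      rintro ⟨hk1, hk2, -⟩
      omega
    rw [h]; exact @MeasurableSet.univ _ (sigAlg Θ ε X Y m)

lemma measSet_tips_eq {m t : ℕ} (ht : t ≤ m + 1) (S : Set ℕ) :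
    MeasurableSet[sigAlg Θ ε X Y m]
      {ω | tips (fun j => Θ j ω) (fun j => X j ω) (fun j => Y j ω) t = S} := by
  have heq : {ω | tips (fun j => Θ j ω) (fun j => X j ω) (fun j => Y j ω) t = S} =
      ⋂ v, {ω | v ∈ tips (fun j => Θ j ω) (fun j => X j ω) (fun j => Y j ω) t ↔ v ∈ S} := by
    ext ω
    simp only [Set.mem_setOf_eq, Set.mem_iInter, Set.ext_iff]
  rw [heq]
  refine MeasurableSet.iInter fun v => ?_
  by_cases hv : v ∈ S
  · have h : {ω : Ω | v ∈ tips (fun j => Θ j ω) (fun j => X j ω) (fun j => Y j ω) t ↔ v ∈ S} =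
        {ω | v ∈ tips (fun j => Θ j ω) (fun j => X j ω) (fun j => Y j ω) t} := by
      ext ω; simp [hv]
    rw [h]; exact measSet_mem_tips Θ ε X Y ht v
  · have h : {ω : Ω | v ∈ tips (fun j => Θ j ω) (fun j => X j ω) (fun j => Y j ω) t ↔ v ∈ S} =
        {ω | v ∈ tips (fun j => Θ j ω) (fun j => X j ω) (fun j => Y j ω) t}ᶜ := by
      ext ω; simp [hv]
    rw [h]; exact (measSet_mem_tips Θ ε X Y ht v).compl

lemma measSet_free_eq {m t : ℕ} (ht : t ≤ m + 1) (S : Set ℕ) :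
    MeasurableSet[sigAlg Θ ε X Y m]
      {ω | free (fun j => Θ j ω) (fun j => X j ω) (fun j => Y j ω) t = S} := by
  have heq : {ω | free (fun j => Θ j ω) (fun j => X j ω) (fun j => Y j ω) t = S} =
      ⋂ v, {ω | v ∈ free (fun j => Θ j ω) (fun j => X j ω) (fun j => Y j ω) t ↔ v ∈ S} := by
    ext ω
    simp only [Set.mem_setOf_eq, Set.mem_iInter, Set.ext_iff]
  rw [heq]
  refine MeasurableSet.iInter fun v => ?_
  by_cases hv : v ∈ S
  · have h : {ω : Ω | v ∈ free (fun j => Θ j ω) (fun j => X j ω) (fun j => Y j ω) t ↔ v ∈ S} =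
        {ω | v ∈ free (fun j => Θ j ω) (fun j => X j ω) (fun j => Y j ω) t} := by
      ext ω; simp [hv]
    rw [h]; exact measSet_mem_free Θ ε X Y ht v
  · have h : {ω : Ω | v ∈ free (fun j => Θ j ω) (fun j => X j ω) (fun j => Y j ω) t ↔ v ∈ S} =
        {ω | v ∈ free (fun j => Θ j ω) (fun j => X j ω) (fun j => Y j ω) t}ᶜ := by
      ext ω; simp [hv]
    rw [h]; exact (measSet_mem_free Θ ε X Y ht v).compl

end IotaDAG

set_option maxHeartbeats 1000000 in
/-- With `b > 10 h_M - 6 h_1 + 3 M ε_max + 2`,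
`κ_A > 1 + max {2 h_M, 3 h_M (h_M + ε_min) / (h_M - 1)}` and `h_M > 1`: for any `i` and
any event `D ∈ Σ_{i-1}` with `D ⊆ {L(t_i) ≤ b}` and `P(D) > 0`, the Step-A event `A_i`
has strictly positive conditional probability given `D`. -/
theorem stepA_positive_probability
    {Ω : Type*} {mΩ : MeasurableSpace Ω}
    (μ : MeasureTheory.Measure Ω) [MeasureTheory.IsProbabilityMeasure μ]
    (M : ℕ) (hM2 : 2 ≤ M)
    (h : ℕ → ℕ) (hpos : 0 < h 1) (hmono : StrictMonoOn h (Set.Icc 1 M))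
    (Iε : Finset ℕ) (hIε : Iε.Nonempty) (hεmin : 0 < Iε.min' hIε)
    (pΘ pε : ℕ → ℝ)
    (hpΘ : ∀ k ∈ Finset.Icc 1 M, 0 < pΘ k) (hpΘsum : ∑ k ∈ Finset.Icc 1 M, pΘ k = 1)
    (hpε : ∀ j ∈ Iε, 0 < pε j) (hpεsum : ∑ j ∈ Iε, pε j = 1)
    (Θ ε X Y : ℕ → Ω → ℕ)
    (hΘm : ∀ n, Measurable (Θ n)) (hεm : ∀ n, Measurable (ε n))
    (hXm : ∀ n, Measurable (X n)) (hYm : ∀ n, Measurable (Y n))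
    -- almost surely the realization is a valid trajectory of the model
    (hmodel : ∀ᵐ ω ∂μ,
      (∀ n, 1 ≤ n → (∃ k, 1 ≤ k ∧ k ≤ M ∧ Θ n ω = h k) ∧ ε n ω ∈ Iε) ∧
      Valid (fun m => Θ m ω) (fun m => ε m ω) (fun m => X m ω) (fun m => Y m ω))
    -- the conditional law of `(Θ_n, ε_n, X_n, Y_n)` given `Σ_{n-1}`:
    -- parents are uniform with replacement on the delayed set of tips
    (hlaw : ∀ n, 1 ≤ n → ∀ k ∈ Finset.Icc 1 M, ∀ j ∈ Iε, ∀ v v' : ℕ,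
      ∀ D : Set Ω, MeasurableSet[sigAlg Θ ε X Y (n - 1)] D →
        (μ (D ∩ {ω | Θ n ω = h k ∧ ε n ω = j ∧ X n ω = v ∧ Y n ω = v'})).toReal
          = ∫ ω in D,
              (if v ∈ tips (fun m => Θ m ω) (fun m => X m ω) (fun m => Y m ω) (n - j) ∧
                  v' ∈ tips (fun m => Θ m ω) (fun m => X m ω) (fun m => Y m ω) (n - j)
                then pΘ k * pε j /
                  (L (fun m => Θ m ω) (fun m => X m ω) (fun m => Y m ω) (n - j) : ℝ) ^ 2
                else 0) ∂μ)
    (b : ℝ)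
    (hb : 10 * (h M : ℝ) - 6 * (h 1 : ℝ) + 3 * M * (Iε.max' hIε : ℝ) + 2 < b)
    (κA : ℕ)
    (hκA : 1 + max (2 * (h M : ℝ))
        (3 * (h M : ℝ) * ((h M : ℝ) + (Iε.min' hIε : ℝ)) / ((h M : ℝ) - 1)) < (κA : ℝ))
    (hhM : 1 < h M)
    (i : ℕ) (D : Set Ω)
    (hD : MeasurableSet[sigAlg Θ ε X Y (i - 1)] D)
    (hDsub : D ⊆ {ω | (L (fun m => Θ m ω) (fun m => X m ω) (fun m => Y m ω) i : ℝ) ≤ b})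
    (hDpos : 0 < μ D) :
    0 < μ[|D] {ω | StepA (fun m => Θ m ω) (fun m => ε m ω) (fun m => X m ω)
      (fun m => Y m ω) (h M) (Iε.min' hIε) κA i} := by
  classical
  have hεm1 : 1 ≤ Iε.min' hIε := hεmin
  set εm := Iε.min' hIε with hεmdef
  have hεmem : εm ∈ Iε := Iε.min'_mem hIε
  have hMmem : M ∈ Finset.Icc 1 M := Finset.mem_Icc.2 ⟨by omega, le_refl M⟩
  have hsig_le : ∀ m, sigAlg Θ ε X Y m ≤ mΩ := by
    intro m
    refine iSup₂_le fun k _ => ?_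
    refine sup_le (sup_le (sup_le ?_ ?_) ?_) ?_
    · rintro t ⟨s, -, rfl⟩; exact hΘm k trivial
    · rintro t ⟨s, -, rfl⟩; exact hεm k trivial
    · rintro t ⟨s, -, rfl⟩; exact hXm k trivial
    · rintro t ⟨s, -, rfl⟩; exact hYm k trivial
  set Good : Set Ω := {ω | (∀ n, 1 ≤ n →
      (∃ k, 1 ≤ k ∧ k ≤ M ∧ Θ n ω = h k) ∧ ε n ω ∈ Iε) ∧
      Valid (fun m => Θ m ω) (fun m => ε m ω) (fun m => X m ω) (fun m => Y m ω)}
    with hGoodDef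
  have hGoodae : μ Goodᶜ = 0 := by
    rw [hGoodDef, Set.compl_setOf]
    exact ae_iff.1 hmodel
  have key : ∀ m : ℕ, ∃ D' : Set Ω,
      MeasurableSet[sigAlg Θ ε X Y (i + m - 1)] D' ∧ D' ⊆ D ∧ 0 < μ D' ∧
      ∀ ω ∈ D', ∀ j, 1 ≤ j → i ≤ j → j < i + m →
        ε j ω = εm ∧ Θ j ω = h M ∧ X j ω = Y j ω ∧
        (¬ tips (fun m => Θ m ω) (fun m => X m ω) (fun m => Y m ω) (j - εm) ⊆
            free (fun m => Θ m ω) (fun m => X m ω) (fun m => Y m ω) j →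
          X j ω ∈ tips (fun m => Θ m ω) (fun m => X m ω) (fun m => Y m ω) (j - εm) \
            free (fun m => Θ m ω) (fun m => X m ω) (fun m => Y m ω) j) ∧
        (tips (fun m => Θ m ω) (fun m => X m ω) (fun m => Y m ω) (j - εm) ⊆
            free (fun m => Θ m ω) (fun m => X m ω) (fun m => Y m ω) j →
          X j ω ∈ tips (fun m => Θ m ω) (fun m => X m ω) (fun m => Y m ω) (j - εm)) := by
    intro m
    induction m with
    | zero =>
      refine ⟨D, by simpa using hD, subset_rfl, hDpos, ?_⟩
      intro ω _ j h1 h2 h3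
      exact absurd h3 (by omega)
    | succ m ih =>
      obtain ⟨D', hD'meas, hD'sub, hD'pos, hD'prop⟩ := ih
      by_cases hn0 : i + m = 0
      · refine ⟨D', ?_, hD'sub, hD'pos, ?_⟩
        · have he : i + (m + 1) - 1 = i + m - 1 := by omega
          rw [he]; exact hD'meas
        · intro ω _ j h1 h2 h3
          exact absurd h3 (by omega)
      · set n := i + m with hn
        have hn1 : 1 ≤ n := by omega
        set P : Finset (Finset ℕ × Finset ℕ) :=
          (Finset.range n).powerset ×ˢ (Finset.range n).powerset with hP
        set pc : Finset ℕ × Finset ℕ → Set Ω := fun p =>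
          D' ∩ {ω | tips (fun k => Θ k ω) (fun k => X k ω) (fun k => Y k ω) (n - εm)
                      = ↑p.1 ∧
                    free (fun k => Θ k ω) (fun k => X k ω) (fun k => Y k ω) n = ↑p.2}
          with hpc
        have hcover : D' ⊆ ⋃ p ∈ P, pc p := by
          intro ω hω
          have hfin1 : (tips (fun k => Θ k ω) (fun k => X k ω) (fun k => Y k ω)
              (n - εm)).Finite := tips_finite _ _ _ _
          have hfin2 : (free (fun k => Θ k ω) (fun k => X k ω) (fun k => Y k ω)
              n).Finite := (tips_finite _ _ _ _).subset (free_subset_tips _ _ _ _)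
          have hmemP : (hfin1.toFinset, hfin2.toFinset) ∈ P := by
            rw [hP, Finset.mem_product]
            constructor
            · rw [Finset.mem_powerset]
              intro w hw
              rw [Set.Finite.mem_toFinset] at hw
              exact Finset.mem_range.2 (mem_tips_lt (by omega) hn1 hw)
            · rw [Finset.mem_powerset]
              intro w hw
              rw [Set.Finite.mem_toFinset] at hw
              exact Finset.mem_range.2
                (mem_tips_lt (le_refl n) hn1 (free_subset_tips _ _ _ _ hw))
          exact Set.mem_biUnion hmemP
            ⟨hω, (Set.Finite.coe_toFinset hfin1).symm, (Set.Finite.coe_toFinset hfin2).symm⟩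
        have hExists : ∃ p ∈ P, μ (pc p) ≠ 0 := by
          by_contra hcon
          push_neg at hcon
          have h0 : μ D' ≤ ∑ p ∈ P, μ (pc p) :=
            le_trans (measure_mono hcover) (measure_biUnion_finset_le P pc)
          rw [Finset.sum_eq_zero (fun p hp => hcon p hp)] at h0
          exact hD'pos.ne' (le_antisymm h0 zero_le)
        obtain ⟨⟨S, Fr⟩, hpP, hpne⟩ := hExists
        have hppos : 0 < μ (pc (S, Fr)) := pos_iff_ne_zero.2 hpne
        have hpcmeas : MeasurableSet[sigAlg Θ ε X Y (n - 1)] (pc (S, Fr)) := by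
          refine MeasurableSet.inter hD'meas ?_
          have h1 := measSet_tips_eq Θ ε X Y (m := n - 1) (t := n - εm)
            (by omega) (↑S : Set ℕ)
          have h2 := measSet_free_eq Θ ε X Y (m := n - 1) (t := n)
            (by omega) (↑Fr : Set ℕ)
          exact h1.inter h2
        have hgoodmem : ∃ ω, ω ∈ pc (S, Fr) ∩ Good := by
          by_contra hcon
          push_neg at hcon
          have hsub : pc (S, Fr) ⊆ Goodᶜ := by
            intro ω hω hg
            exact hcon ω ⟨hω, hg⟩
          exact hppos.ne'
            (le_antisymm (le_trans (measure_mono hsub) (le_of_eq hGoodae)) zero_le)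
        obtain ⟨ω₀, hω₀pc, hω₀g⟩ := hgoodmem
        have hSne : S.Nonempty := by
          have hne := tips_nonempty hω₀g.2 (n - εm)
          rw [hω₀pc.2.1] at hne
          exact Finset.coe_nonempty.1 hne
        obtain ⟨v, hvS, hvcond⟩ : ∃ v, v ∈ (S : Set ℕ) ∧
            (¬ (S : Set ℕ) ⊆ (Fr : Set ℕ) → v ∉ (Fr : Set ℕ)) := by
          by_cases hsf : (S : Set ℕ) ⊆ (Fr : Set ℕ)
          · obtain ⟨w, hw⟩ := hSne
            exact ⟨w, by exact_mod_cast hw, fun hc => absurd hsf hc⟩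
          · obtain ⟨w, hw1, hw2⟩ := Set.not_subset.1 hsf
            exact ⟨w, hw1, fun _ => hw2⟩
        have hlawn := hlaw n hn1 M hMmem εm hεmem v v (pc (S, Fr)) hpcmeas
        set c : ℝ := pΘ M * pε εm / ((S.card : ℝ)) ^ 2 with hc
        have hcpos : 0 < c := by
          apply div_pos (mul_pos (hpΘ M hMmem) (hpε εm hεmem))
          exact pow_pos (Nat.cast_pos.2 (Finset.card_pos.2 hSne)) 2
        have hEqOn : Set.EqOn
            (fun ω => if v ∈ tips (fun m => Θ m ω) (fun m => X m ω) (fun m => Y m ω)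
                  (n - εm) ∧
                v ∈ tips (fun m => Θ m ω) (fun m => X m ω) (fun m => Y m ω) (n - εm)
              then pΘ M * pε εm /
                (L (fun m => Θ m ω) (fun m => X m ω) (fun m => Y m ω) (n - εm) : ℝ) ^ 2
              else 0)
            (fun _ => c) (pc (S, Fr)) := by
          intro ω hω
          have h1 : tips (fun m => Θ m ω) (fun m => X m ω) (fun m => Y m ω) (n - εm)
              = ↑S := hω.2.1
          have hv' : v ∈ tips (fun m => Θ m ω) (fun m => X m ω) (fun m => Y m ω)
              (n - εm) := by rw [h1]; exact hvS
          have hL : L (fun m => Θ m ω) (fun m => X m ω) (fun m => Y m ω) (n - εm)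
              = S.card := by
            simp only [L]
            rw [h1, Set.ncard_coe_finset]
          have hcond : v ∈ tips (fun m => Θ m ω) (fun m => X m ω) (fun m => Y m ω)
                (n - εm) ∧
              v ∈ tips (fun m => Θ m ω) (fun m => X m ω) (fun m => Y m ω) (n - εm) :=
            ⟨hv', hv'⟩
          dsimp only
          rw [if_pos hcond, hL, hc]
        have hRHS : (μ (pc (S, Fr) ∩ {ω | Θ n ω = h M ∧ ε n ω = εm ∧
            X n ω = v ∧ Y n ω = v})).toReal = (μ (pc (S, Fr))).toReal * c := by
          rw [hlawn, setIntegral_congr_fun (hsig_le _ _ hpcmeas) hEqOn,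
            setIntegral_const, smul_eq_mul, measureReal_def]
        have hposE : 0 < μ (pc (S, Fr) ∩ {ω | Θ n ω = h M ∧ ε n ω = εm ∧
            X n ω = v ∧ Y n ω = v}) := by
          rw [pos_iff_ne_zero]
          intro h0
          rw [h0] at hRHS
          simp only [ENNReal.toReal_zero] at hRHS
          have := mul_pos (ENNReal.toReal_pos hpne (measure_ne_top μ _)) hcpos
          rw [← hRHS] at this
          exact lt_irrefl 0 this
        refine ⟨pc (S, Fr) ∩ {ω | Θ n ω = h M ∧ ε n ω = εm ∧ X n ω = v ∧ Y n ω = v},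
          ?_, fun ω hω => hD'sub hω.1.1, hposE, ?_⟩
        · have he : i + (m + 1) - 1 = n := by omega
          rw [he]
          refine MeasurableSet.inter
            ((sigAlg_mono Θ ε X Y (Nat.sub_le n 1)) _ hpcmeas) ?_
          have hev : {ω | Θ n ω = h M ∧ ε n ω = εm ∧ X n ω = v ∧ Y n ω = v} =
              Θ n ⁻¹' {h M} ∩ ε n ⁻¹' {εm} ∩ X n ⁻¹' {v} ∩ Y n ⁻¹' {v} := by
            ext ω
            simp only [Set.mem_setOf_eq, Set.mem_inter_iff, Set.mem_preimage,
              Set.mem_singleton_iff]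
            tauto
          rw [hev]
          exact ((((measSet_Θ Θ ε X Y hn1 (le_refl n) _).inter
            (measSet_ε Θ ε X Y hn1 (le_refl n) _)).inter
            (measSet_X Θ ε X Y hn1 (le_refl n) _)).inter
            (measSet_Y Θ ε X Y hn1 (le_refl n) _))
        · intro ω hω j h1 h2 h3
          rcases Nat.lt_or_ge j n with hj | hj
          · exact hD'prop ω hω.1.1 j h1 h2 hj
          · have hjn : j = n := by omega
            subst hjn
            obtain ⟨⟨hωD', hωtips, hωfree⟩, hωΘ, hωε, hωX, hωY⟩ := hω
            refine ⟨hωε, hωΘ, by rw [hωX, hωY], ?_, ?_⟩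
            · intro hns
              rw [hωX, hωtips, hωfree]
              rw [hωtips, hωfree] at hns
              exact ⟨hvS, hvcond hns⟩
            · intro _
              rw [hωX, hωtips]
              exact hvS
  obtain ⟨Df, hDfmeas, hDfsub, hDfpos, hDfprop⟩ := key κA
  have hDm : MeasurableSet D := hsig_le (i - 1) D hD
  rw [ProbabilityTheory.cond_apply hDm]
  refine ENNReal.mul_pos ?_ ?_
  · exact ENNReal.inv_ne_zero.2 (measure_ne_top μ D)
  · have hsubA : Df ⊆ D ∩ {ω | StepA (fun m => Θ m ω) (fun m => ε m ω)
        (fun m => X m ω) (fun m => Y m ω) (h M) εm κA i} := by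
      intro ω hω
      exact ⟨hDfsub hω, fun j h1 h2 h3 => hDfprop ω hω j h1 h2 h3⟩
    exact (lt_of_lt_of_le hDfpos (measure_mono (hsubA.trans subset_rfl))).ne'
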